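/- Let V be a finite-dimensional complex vector space, L a symmetric 2n-multilinear form on V, q a symmetric bilinear form on V, and C ∈ ℂ with L(x,...,x) = C·q(x,x)^n for all x ∈ V. If h ∈ V satisfies q(h,h) = 0, then for all a ∈ V: binomial(2n,n) · L(a,...,a,h,...,h) = C · 2^n · q(a,h)^n, where a and h each appear n times in L. -/

import Mathlib

open Polynomial in
lemma coeff_linear_pow_aux (u v : ℂ) (n : ℕ) :
    ((Polynomial.C u + Polynomial.C v * Polynomial.X) ^ n).coeff n = v ^ n := by
  induction n with
  | zero => simp
  | succ m ih =>
    have hdeg : ((C u + C v * X) ^ m).natDegree ≤ m := by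
      refine (Polynomial.natDegree_pow_le).trans ?_
      have h1 : (C u + C v * X).natDegree ≤ 1 := by
        refine (Polynomial.natDegree_add_le _ _).trans ?_
        simp only [Polynomial.natDegree_C, max_le_iff]
        exact ⟨Nat.zero_le _, (Polynomial.natDegree_C_mul_le _ _).trans (by simp)⟩
      calc m * (C u + C v * X).natDegree ≤ m * 1 := Nat.mul_le_mul_left _ h1
        _ = m := by omega
    rw [pow_succ, mul_add, Polynomial.coeff_add, Polynomial.coeff_mul_C,
      Polynomial.coeff_eq_zero_of_natDegree_lt (lt_of_le_of_lt hdeg (Nat.lt_succ_self m)),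
      ← mul_assoc, Polynomial.coeff_mul_X, Polynomial.coeff_mul_C, ih]
    ring

lemma exists_perm_mem_iff_aux {α : Type*} [Fintype α] [DecidableEq α] (s t : Finset α)
    (hc : s.card = t.card) : ∃ σ : Equiv.Perm α, ∀ i, σ i ∈ s ↔ i ∈ t := by
  have hc' : tᶜ.card = sᶜ.card := by simp [Finset.card_compl, hc]
  let e1 : {x // x ∈ t} ≃ {x // x ∈ s} := Finset.equivOfCardEq hc.symm
  let e2' : {x // ¬ x ∈ t} ≃ {x // ¬ x ∈ s} :=
    (Equiv.subtypeEquivRight (fun x => (Finset.mem_compl).symm)).trans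
      ((Finset.equivOfCardEq hc').trans (Equiv.subtypeEquivRight (fun x => Finset.mem_compl)))
  refine ⟨Equiv.subtypeCongr e1 e2', fun i => ?_⟩
  by_cases hi : i ∈ t
  · simp only [Equiv.subtypeCongr, Equiv.trans_apply,
      Equiv.sumCompl_symm_apply_of_pos hi, Equiv.sumCongr_apply, Sum.map_inl,
      Equiv.sumCompl_apply_inl]
    exact iff_of_true (e1 ⟨i, hi⟩).2 hi
  · simp only [Equiv.subtypeCongr, Equiv.trans_apply,
      Equiv.sumCompl_symm_apply_of_neg hi, Equiv.sumCongr_apply, Sum.map_inr,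
      Equiv.sumCompl_apply_inr]
    exact iff_of_false (e2' ⟨i, hi⟩).2 hi

lemma card_filter_lt_aux (m k : ℕ) (hk : k ≤ m) :
    (Finset.univ.filter fun i : Fin m => (i:ℕ) < k).card = k := by
  have : (Finset.univ.filter fun i : Fin m => (i:ℕ) < k)
      = Finset.map (Fin.castLEEmb hk) Finset.univ := by
    ext i
    simp only [Finset.mem_filter, Finset.mem_univ, true_and, Finset.mem_map,
      Fin.castLEEmb_apply]
    constructor
    · intro hi; exact ⟨⟨i, hi⟩, rfl⟩
    · rintro ⟨j, rfl⟩; exact j.2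
  simp [this]

/-- the middle (λ^n) coefficient of the Fujiki relation. -/
theorem stmt1 {V : Type*} [AddCommGroup V] [Module ℂ V] [FiniteDimensional ℂ V]
    (n : ℕ) (hn : 1 ≤ n)
    (L : MultilinearMap ℂ (fun _ : Fin (2*n) => V) ℂ)
    (hLsymm : ∀ (σ : Equiv.Perm (Fin (2*n))) (v : Fin (2*n) → V), L (v ∘ σ) = L v)
    (q : V →ₗ[ℂ] V →ₗ[ℂ] ℂ) (hqsymm : ∀ x y, q x y = q y x)
    (C : ℂ) (hFujiki : ∀ x : V, L (fun _ => x) = C * (q x x)^n)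
    (h : V) (hh : q h h = 0) :
    ∀ a : V,
      (Nat.choose (2*n) n : ℂ) * L (fun i => if (i : ℕ) < n then a else h)
        = C * 2^n * (q a h)^n := by
  intro a
  classical
  set hv : Fin (2*n) → V := fun _ => h with hhv
  set av : Fin (2*n) → V := fun _ => a with hav
  -- symmetry: value depends only on the cardinality of the h-set
  have Lcard : ∀ s t : Finset (Fin (2*n)), s.card = t.card →
      L (s.piecewise hv av) = L (t.piecewise hv av) := by
    intro s t hst
    obtain ⟨σ, hσ⟩ := exists_perm_mem_iff_aux s t hst
    have : (s.piecewise hv av) ∘ σ = t.piecewise hv av := by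
      funext i
      simp only [Function.comp_apply, Finset.piecewise]
      by_cases hi : i ∈ t
      · rw [if_pos ((hσ i).mpr hi), if_pos hi]
      · rw [if_neg (fun hc => hi ((hσ i).mp hc)), if_neg hi]
    rw [← hLsymm σ (s.piecewise hv av), this]
  set Aval : ℕ → ℂ :=
    fun k => L ((Finset.univ.filter fun i : Fin (2*n) => (i:ℕ) < k).piecewise hv av) with hAval
  -- key expansion
  have key : ∀ t : ℂ, L (fun _ => a + t • h)
      = ∑ k ∈ Finset.range (2*n+1), (Nat.choose (2*n) k : ℂ) * t^k * Aval k := by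
    intro t
    have h1 : (fun _ : Fin (2*n) => a + t • h)
        = (fun _ : Fin (2*n) => t • h) + fun _ => a := by
      funext i; simp [add_comm]
    rw [h1, MultilinearMap.map_add_univ]
    have h2 : ∀ s : Finset (Fin (2*n)),
        L (s.piecewise (fun _ => t • h) (fun _ => a)) = t ^ s.card * Aval s.card := by
      intro s
      have he : s.piecewise (fun i => t • (s.piecewise hv av) i) (s.piecewise hv av)
          = s.piecewise (fun _ => t • h) (fun _ => a) := by
        funext i
        by_cases hi : i ∈ s <;> simp [Finset.piecewise, hi, hhv, hav]
      have h3 := MultilinearMap.map_piecewise_smul L (fun _ => t) (s.piecewise hv av) s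
      rw [← he, h3, Finset.prod_const, smul_eq_mul]
      congr 1
      have hs_le : s.card ≤ 2*n := by
        simpa using Finset.card_le_card (Finset.subset_univ s)
      exact Lcard s _ (by rw [card_filter_lt_aux (2*n) s.card hs_le])
    calc (∑ s : Finset (Fin (2*n)), L (s.piecewise (fun _ => t • h) fun _ => a))
        = ∑ s : Finset (Fin (2*n)), t ^ s.card * Aval s.card := by
          exact Finset.sum_congr rfl fun s _ => h2 s
      _ = ∑ s ∈ (Finset.univ : Finset (Fin (2*n))).powerset, t ^ s.card * Aval s.card := by
          rw [Finset.powerset_univ]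
      _ = ∑ k ∈ Finset.range ((Finset.univ : Finset (Fin (2*n))).card + 1),
            ∑ s ∈ Finset.powersetCard k (Finset.univ : Finset (Fin (2*n))),
              t ^ s.card * Aval s.card := Finset.sum_powerset _ _
      _ = ∑ k ∈ Finset.range (2*n+1), (Nat.choose (2*n) k : ℂ) * t^k * Aval k := by
          rw [Finset.card_univ, Fintype.card_fin]
          refine Finset.sum_congr rfl fun k _ => ?_
          rw [Finset.sum_congr rfl (fun s hs => by
            rw [(Finset.mem_powersetCard.mp hs).2]),
            Finset.sum_const, Finset.card_powersetCard, Finset.card_univ, Fintype.card_fin,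
            nsmul_eq_mul]
          ring
  -- polynomial identity
  set d : ℂ := q a h with hd
  set P : Polynomial ℂ := ∑ k ∈ Finset.range (2*n+1),
    Polynomial.C ((Nat.choose (2*n) k : ℂ) * Aval k) * Polynomial.X ^ k with hP
  set Q : Polynomial ℂ := Polynomial.C C *
    (Polynomial.C (q a a) + Polynomial.C (2*d) * Polynomial.X) ^ n with hQ
  have heval : ∀ t : ℂ, P.eval t = Q.eval t := by
    intro t
    have hq2 : q (a + t • h) (a + t • h) = q a a + 2*d*t := by
      simp only [map_add, map_smul, LinearMap.add_apply, LinearMap.smul_apply, smul_eq_mul,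
        hh, hd, hqsymm h a]
      ring
    have hL : L (fun _ => a + t • h) = C * (q a a + 2*d*t)^n := by
      rw [hFujiki (a + t • h), hq2]
    have hPe : P.eval t = ∑ k ∈ Finset.range (2*n+1),
        (Nat.choose (2*n) k : ℂ) * t^k * Aval k := by
      rw [hP, Polynomial.eval_finset_sum]
      exact Finset.sum_congr rfl fun k _ => by simp; ring
    rw [hPe, ← key t, hL, hQ]
    simp
  have hPQ : P = Q := Polynomial.funext heval
  have hPc : P.coeff n = (Nat.choose (2*n) n : ℂ) * Aval n := by
    rw [hP, Polynomial.finset_sum_coeff]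
    have h1 : ∀ k ∈ Finset.range (2*n+1),
        (Polynomial.C ((Nat.choose (2*n) k : ℂ) * Aval k) * Polynomial.X ^ k).coeff n
        = if k = n then (Nat.choose (2*n) k : ℂ) * Aval k else 0 := by
      intro k _
      rw [Polynomial.coeff_C_mul, Polynomial.coeff_X_pow]
      by_cases hk : k = n
      · simp [hk]
      · rw [if_neg (fun h' => hk h'.symm), if_neg hk, mul_zero]
    rw [Finset.sum_congr rfl h1, Finset.sum_ite_eq' (Finset.range (2*n+1)) n
      (fun k => (Nat.choose (2*n) k : ℂ) * Aval k),
      if_pos (Finset.mem_range.mpr (by omega))]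
  have hQc : Q.coeff n = C * (2*d)^n := by
    rw [hQ, Polynomial.coeff_C_mul, coeff_linear_pow_aux]
  have hmain : (Nat.choose (2*n) n : ℂ) * Aval n = C * 2^n * d^n := by
    have := hPc.symm.trans (by rw [hPQ, hQc])
    rw [this, mul_pow]; ring
  -- identify the target vector with Aval n
  have hvec : L (fun i => if (i : ℕ) < n then a else h) = Aval n := by
    have hveq : (fun i : Fin (2*n) => if (i : ℕ) < n then a else h)
        = (Finset.univ.filter fun i : Fin (2*n) => ¬ (i:ℕ) < n).piecewise hv av := by
      funext i
      by_cases hi : (i:ℕ) < n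
      · rw [if_pos hi, Finset.piecewise_eq_of_notMem _ _ _ (by simp [hi])]
      · rw [if_neg hi, Finset.piecewise_eq_of_mem _ _ _ (by simp; omega)]
    rw [hveq, hAval]
    apply Lcard
    have h1 : (Finset.univ.filter fun i : Fin (2*n) => ¬ (i:ℕ) < n)
        = (Finset.univ.filter fun i : Fin (2*n) => (i:ℕ) < n)ᶜ := by
      ext i; simp
    rw [h1, Finset.card_compl, card_filter_lt_aux (2*n) n (by omega), Fintype.card_fin]
    omega
  rw [hvec, hmain, hd]
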